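/- With E u = x² u'' + α x u' + λ u on (0,∞), φ = (α-1)/2, suppose φ² = λ (double root of the indicial polynomial). Then for every positive integer k and every 0 ≤ l ≤ 2k−1, the function x ↦ x^{-φ}(ln x)^l satisfies E^k u = 0 on (0,∞). -/

import Mathlib

open Real Set

/-- The Euler operator `E u = x² u'' + α x u' + λ u`. -/
noncomputable def Eul (α lam : ℝ) (u : ℝ → ℝ) : ℝ → ℝ :=
  fun x => x ^ 2 * deriv (deriv u) x + α * x * deriv u x + lam * u x

/-- The family of functions. -/
noncomputable def Gf (φ : ℝ) (l : ℕ) : ℝ → ℝ := fun y => y ^ (-φ) * Real.log y ^ l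

lemma deriv_Gf (φ : ℝ) (l : ℕ) {x : ℝ} (hx : 0 < x) :
    deriv (Gf φ l) x =
      x ^ (-φ - 1) * (-φ * Real.log x ^ l + l * Real.log x ^ (l - 1)) := by
  have h1 : HasDerivAt (fun y : ℝ => y ^ (-φ)) (-φ * x ^ (-φ - 1)) x :=
    Real.hasDerivAt_rpow_const (Or.inl hx.ne')
  have h2 : HasDerivAt (fun y : ℝ => Real.log y ^ l)
      (l * Real.log x ^ (l - 1) * x⁻¹) x :=
    (Real.hasDerivAt_log hx.ne').pow l
  have := (h1.mul h2).deriv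
  rw [show ((fun y : ℝ => y ^ (-φ)) * fun y : ℝ => Real.log y ^ l) = Gf φ l from rfl] at this
  rw [this]
  have hxi : x ^ (-φ) * x⁻¹ = x ^ (-φ - 1) := by
    rw [show x⁻¹ = x ^ (-1 : ℝ) by rw [Real.rpow_neg_one], ← Real.rpow_add hx]
    first | rfl | (congr 1 <;> ring)
  rw [show x ^ (-φ) * (↑l * Real.log x ^ (l - 1) * x⁻¹) =
      (x ^ (-φ) * x⁻¹) * (↑l * Real.log x ^ (l - 1)) by ring, hxi]
  ring

lemma Eul_Gf (α lam φ : ℝ) (hφ : φ = (α - 1) / 2) (h : φ ^ 2 = lam) (l : ℕ)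
    {x : ℝ} (hx : 0 < x) :
    Eul α lam (Gf φ l) x = (l * (l - 1) : ℕ) * Gf φ (l - 2) x := by
  set L := Real.log x with hL
  -- first derivative as a function on Ioi 0
  set w : ℝ → ℝ := fun y => y ^ (-φ - 1) * (-φ * Real.log y ^ l + l * Real.log y ^ (l - 1))
    with hw
  have hderiv1 : ∀ y ∈ Ioi (0:ℝ), deriv (Gf φ l) y = w y := fun y hy => deriv_Gf φ l hy
  have hev : deriv (Gf φ l) =ᶠ[nhds x] w :=
    Filter.eventuallyEq_of_mem (isOpen_Ioi.mem_nhds hx) hderiv1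
  -- derivative of w
  have h1 : HasDerivAt (fun y : ℝ => y ^ (-φ - 1)) ((-φ - 1) * x ^ (-φ - 1 - 1)) x :=
    Real.hasDerivAt_rpow_const (Or.inl hx.ne')
  have h2 : HasDerivAt (fun y : ℝ => -φ * Real.log y ^ l + l * Real.log y ^ (l - 1))
      (-φ * (l * Real.log x ^ (l - 1) * x⁻¹) +
        l * ((l - 1 : ℕ) * Real.log x ^ (l - 1 - 1) * x⁻¹)) x :=
    (((Real.hasDerivAt_log hx.ne').pow l).const_mul (-φ)).add
      (((Real.hasDerivAt_log hx.ne').pow (l - 1)).const_mul (l : ℝ))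
  have hw' : HasDerivAt w
      ((-φ - 1) * x ^ (-φ - 1 - 1) * (-φ * L ^ l + l * L ^ (l - 1)) +
        x ^ (-φ - 1) * (-φ * (l * L ^ (l - 1) * x⁻¹) +
          l * ((l - 1 : ℕ) * L ^ (l - 1 - 1) * x⁻¹))) x := h1.mul h2
  have hderiv2 : deriv (deriv (Gf φ l)) x =
      (-φ - 1) * x ^ (-φ - 1 - 1) * (-φ * L ^ l + l * L ^ (l - 1)) +
        x ^ (-φ - 1) * (-φ * (l * L ^ (l - 1) * x⁻¹) +
          l * ((l - 1 : ℕ) * L ^ (l - 1 - 1) * x⁻¹)) := by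
    rw [hev.deriv_eq, hw'.deriv]
  -- now compute
  have hα : α = 2 * φ + 1 := by rw [hφ]; ring
  have hlam : lam = φ ^ 2 := h.symm
  have e1 : (x : ℝ) ^ (2 : ℕ) * x ^ (-φ - 1 - 1) = x ^ (-φ) := by
    rw [← Real.rpow_natCast x 2, ← Real.rpow_add hx]
    first | rfl | (congr 1 <;> (push_cast; ring))
  have e2 : (x : ℝ) ^ (2 : ℕ) * (x ^ (-φ - 1) * x⁻¹) = x ^ (-φ) := by
    rw [show x⁻¹ = x ^ (-1 : ℝ) by rw [Real.rpow_neg_one],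
      ← Real.rpow_natCast x 2, ← Real.rpow_add hx, ← Real.rpow_add hx]
    first | rfl | (congr 1 <;> (push_cast; ring))
  have e3 : x * x ^ (-φ - 1) = x ^ (-φ) := by
    nth_rewrite 1 [show x = x ^ (1 : ℝ) by rw [Real.rpow_one]]
    rw [← Real.rpow_add hx]; first | rfl | (congr 1 <;> ring)
  have hsub : l - 1 - 1 = l - 2 := by omega
  have hcast : ((l * (l - 1) : ℕ) : ℝ) = (l : ℝ) * ((l - 1 : ℕ) : ℝ) := by push_cast; ring
  simp only [Eul, hderiv2, deriv_Gf φ l hx, Gf, hsub, ← hL, hcast]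
  rw [show (x:ℝ) ^ (2:ℕ) * ((-φ - 1) * x ^ (-φ - 1 - 1) * (-φ * L ^ l + l * L ^ (l - 1)) +
        x ^ (-φ - 1) * (-φ * (l * L ^ (l - 1) * x⁻¹) +
          l * ((l - 1 : ℕ) * L ^ (l - 2) * x⁻¹))) =
      (x ^ (2:ℕ) * x ^ (-φ - 1 - 1)) * ((-φ - 1) * (-φ * L ^ l + l * L ^ (l - 1))) +
      (x ^ (2:ℕ) * (x ^ (-φ - 1) * x⁻¹)) * (-φ * (l * L ^ (l - 1)) +
          l * ((l - 1 : ℕ) * L ^ (l - 2))) by ring, e1, e2]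
  rw [show α * x * (x ^ (-φ - 1) * (-φ * L ^ l + l * L ^ (l - 1))) =
      (x * x ^ (-φ - 1)) * (α * (-φ * L ^ l + l * L ^ (l - 1))) by ring, e3]
  rw [hα, hlam]
  ring

/-- Eul only depends on the function on an open set. -/
lemma Eul_congr (α lam : ℝ) {u v : ℝ → ℝ} (huv : EqOn u v (Ioi 0)) :
    EqOn (Eul α lam u) (Eul α lam v) (Ioi 0) := by
  intro x hx
  have hev : u =ᶠ[nhds x] v := Filter.eventuallyEq_of_mem (isOpen_Ioi.mem_nhds hx) huv
  have hd1 : ∀ y ∈ Ioi (0:ℝ), deriv u y = deriv v y := by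
    intro y hy
    exact (Filter.eventuallyEq_of_mem (isOpen_Ioi.mem_nhds hy) huv).deriv_eq
  have hd2 : deriv (deriv u) x = deriv (deriv v) x :=
    (Filter.eventuallyEq_of_mem (isOpen_Ioi.mem_nhds hx) hd1).deriv_eq
  simp only [Eul, hd2, hd1 x hx, huv hx]

lemma Eul_iterate_congr (α lam : ℝ) (k : ℕ) {u v : ℝ → ℝ} (huv : EqOn u v (Ioi 0)) :
    EqOn ((Eul α lam)^[k] u) ((Eul α lam)^[k] v) (Ioi 0) := by
  induction k generalizing u v with
  | zero => simpa using huv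
  | succ n ih =>
    rw [Function.iterate_succ_apply, Function.iterate_succ_apply]
    exact ih (Eul_congr α lam huv)

lemma Eul_const_mul (α lam c : ℝ) (u : ℝ → ℝ) :
    Eul α lam (fun y => c * u y) = fun x => c * Eul α lam u x := by
  have hd : deriv (fun y => c * u y) = fun y => c * deriv u y := by
    funext y; exact deriv_const_mul_field c
  funext x
  simp only [Eul, hd]
  rw [show deriv (fun y => c * deriv u y) x = c * deriv (deriv u) x from
    deriv_const_mul_field c]
  ring

lemma Eul_iterate_const_mul (α lam c : ℝ) (k : ℕ) (u : ℝ → ℝ) :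
    (Eul α lam)^[k] (fun y => c * u y) = fun x => c * (Eul α lam)^[k] u x := by
  induction k generalizing u with
  | zero => rfl
  | succ n ih =>
    rw [Function.iterate_succ_apply, Eul_const_mul, ih]
    rw [Function.iterate_succ_apply]

theorem stmt6 (α lam : ℝ) (φ : ℝ) (hφ : φ = (α - 1) / 2) (h : φ ^ 2 = lam)
    (k : ℕ) (hk : 1 ≤ k) (l : ℕ) (hl : l ≤ 2 * k - 1) :
    ∀ x : ℝ, 0 < x →
      (Eul α lam)^[k] (fun y => y ^ (-φ) * Real.log y ^ l) x = 0 := by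
  have main : ∀ k : ℕ, 1 ≤ k → ∀ l : ℕ, l ≤ 2 * k - 1 → ∀ x : ℝ, 0 < x →
      (Eul α lam)^[k] (Gf φ l) x = 0 := by
    intro k
    induction k with
    | zero => omega
    | succ n ih =>
      intro _ l hl x hx
      by_cases hn : n = 0
      · subst hn
        rw [Function.iterate_succ_apply, Function.iterate_zero_apply]
        rw [Eul_Gf α lam φ hφ h l hx]
        interval_cases l <;> norm_num
      · have hn1 : 1 ≤ n := Nat.one_le_iff_ne_zero.mpr hn
        rw [Function.iterate_succ_apply]
        have heq : EqOn (Eul α lam (Gf φ l))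
            (fun y => ((l * (l - 1) : ℕ) : ℝ) * Gf φ (l - 2) y) (Ioi 0) := by
          intro y hy
          exact Eul_Gf α lam φ hφ h l hy
        rw [Eul_iterate_congr α lam n heq hx, Eul_iterate_const_mul]
        show ((l * (l - 1) : ℕ) : ℝ) * (Eul α lam)^[n] (Gf φ (l - 2)) x = 0
        rw [ih hn1 (l - 2) (by omega) x hx, mul_zero]
  intro x hx
  exact main k hk l hl x hx
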